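/- Let A(t) : D ⊂ X → X be closed operators with common dense domain D and bounded inverses A(t)⁻¹ ∈ L(X), and suppose t ↦ A(t)x is continuously differentiable for each x ∈ D with derivative Ȧ(t)x. Then for every x ∈ X the map (s,t) ↦ (1/(t−s))·(A(t)A(s)⁻¹ − 1)x, defined for s ≠ t, extends to a continuous map on [0,1]², given on the diagonal by (t,t) ↦ Ȧ(t)A(t)⁻¹x; in particular it is bounded and uniformly continuous on {(s,t) : s ≠ t}. -/

import Mathlib

open Set Filter intervalIntegral

theorem stmt12
    {X : Type*} [NormedAddCommGroup X] [NormedSpace ℝ X] [CompleteSpace X]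
    (D : Submodule ℝ X) (hD : Dense (D : Set X))
    (A : ℝ → D →ₗ[ℝ] X)
    (hclosed : ∀ t, IsClosed {p : X × X | ∃ h : p.1 ∈ D, A t ⟨p.1, h⟩ = p.2})
    (R : ℝ → X →L[ℝ] X) (hmem : ∀ s x, R s x ∈ D)
    (hR1 : ∀ s x, A s ⟨R s x, hmem s x⟩ = x)
    (hR2 : ∀ s (y : D), R s (A s y) = y)
    (A' : ℝ → D → X)
    (hderiv : ∀ y : D, ∀ t ∈ Set.Icc (0:ℝ) 1,
      HasDerivWithinAt (fun t => A t y) (A' t y) (Set.Icc 0 1) t)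
    (hcont : ∀ y : D, ContinuousOn (fun t => A' t y) (Set.Icc (0:ℝ) 1)) :
    ∀ x : X, ∃ F : ℝ × ℝ → X,
      ContinuousOn F (Set.Icc (0:ℝ) 1 ×ˢ Set.Icc (0:ℝ) 1) ∧
      (∀ s ∈ Set.Icc (0:ℝ) 1, ∀ t ∈ Set.Icc (0:ℝ) 1, s ≠ t →
        F (s, t) = (t - s)⁻¹ • (A t ⟨R s x, hmem s x⟩ - x)) ∧
      (∀ t ∈ Set.Icc (0:ℝ) 1, F (t, t) = A' t ⟨R t x, hmem t x⟩) ∧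
      (∃ M : ℝ, ∀ s ∈ Set.Icc (0:ℝ) 1, ∀ t ∈ Set.Icc (0:ℝ) 1, s ≠ t →
        ‖(t - s)⁻¹ • (A t ⟨R s x, hmem s x⟩ - x)‖ ≤ M) ∧
      UniformContinuousOn
        (fun p : ℝ × ℝ => (p.2 - p.1)⁻¹ • (A p.2 ⟨R p.1 x, hmem p.1 x⟩ - x))
        {p : ℝ × ℝ | p ∈ Set.Icc (0:ℝ) 1 ×ˢ Set.Icc (0:ℝ) 1 ∧ p.1 ≠ p.2} := by
  intro x
  -- abbreviation for the interval
  set I : Set ℝ := Set.Icc (0:ℝ) 1 with hIdef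
  -- Step 1: `A t ∘ R s` as a continuous linear map, via the closed graph theorem
  have hTex : ∀ t s : ℝ, ∃ T : X →L[ℝ] X, ∀ z, T z = A t ⟨R s z, hmem s z⟩ := by
    intro t s
    set L : X →ₗ[ℝ] X := (A t).comp (((R s) : X →ₗ[ℝ] X).codRestrict D (hmem s)) with hL
    have hgraph : IsClosed (L.graph : Set (X × X)) := by
      have he : (L.graph : Set (X × X)) =
          (fun p : X × X => ((R s) p.1, p.2)) ⁻¹'
            {p : X × X | ∃ h : p.1 ∈ D, A t ⟨p.1, h⟩ = p.2} := by
        ext ⟨a, b⟩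
        simp only [LinearMap.mem_graph_iff, Set.mem_preimage, Set.mem_setOf_eq]
        constructor
        · intro h; exact ⟨hmem s a, h.symm⟩
        · rintro ⟨h, hb⟩; exact hb.symm
      rw [he]
      exact (hclosed t).preimage (((R s).continuous.comp continuous_fst).prodMk continuous_snd)
    exact ⟨⟨L, L.continuous_of_isClosed_graph hgraph⟩, fun z => rfl⟩
  choose T hT using hTex
  have hT1 : ∀ s z, T s s z = z := by
    intro s z; rw [hT]; exact hR1 s z
  have hTcomp : ∀ t s₀ s z, T t s₀ (T s₀ s z) = T t s z := by
    intro t s₀ s z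
    have harg : (⟨R s₀ (T s₀ s z), hmem s₀ (T s₀ s z)⟩ : D) = ⟨R s z, hmem s z⟩ := by
      apply Subtype.ext
      show R s₀ (T s₀ s z) = R s z
      rw [hT]
      exact hR2 s₀ ⟨R s z, hmem s z⟩
    rw [hT t s₀ (T s₀ s z), harg, ← hT]
  have hTd : ∀ s z, ∀ t ∈ I, HasDerivWithinAt (fun u => T u s z)
      (A' t ⟨R s z, hmem s z⟩) I t := by
    intro s z t ht
    have h := hderiv ⟨R s z, hmem s z⟩ t ht
    simpa only [← hT] using h
  -- uniqueness of derivatives within Icc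
  have huniq : ∀ (f : ℝ → X) (a b : X), ∀ τ ∈ I, HasDerivWithinAt f a I τ →
      HasDerivWithinAt f b I τ → a = b := by
    intro f a b τ hτ h1 h2
    exact UniqueDiffWithinAt.eq_deriv I (uniqueDiffOn_Icc zero_lt_one τ hτ) h1 h2
  -- the punctured within-filter is nontrivial
  have hneBot : ∀ τ ∈ I, (nhdsWithin τ (I \ {τ})).NeBot := by
    intro τ hτ
    rcases eq_or_lt_of_le hτ.2 with h1 | h1
    · have hb : (nhdsWithin (1:ℝ) (Set.Ioo (0:ℝ) 1)).NeBot :=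
        right_nhdsWithin_Ioo_neBot zero_lt_one
      rw [h1]
      refine hb.mono (nhdsWithin_mono _ ?_)
      intro u hu
      exact ⟨⟨hu.1.le, hu.2.le⟩, ne_of_lt hu.2⟩
    · have hb : (nhdsWithin τ (Set.Ioo τ 1)).NeBot := left_nhdsWithin_Ioo_neBot h1
      refine hb.mono (nhdsWithin_mono _ ?_)
      intro u hu
      exact ⟨⟨le_trans hτ.1 hu.1.le, hu.2.le⟩, (ne_of_gt hu.1)⟩
  -- mean value inequality for `u ↦ T u s z`
  have hMV : ∀ s z a b, a ∈ I → b ∈ I → ∀ C : ℝ,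
      (∀ τ ∈ I, ‖A' τ (⟨R s z, hmem s z⟩ : D)‖ ≤ C) →
      ‖T b s z - T a s z‖ ≤ C * ‖b - a‖ := by
    intro s z a b ha hb C hC
    exact Convex.norm_image_sub_le_of_norm_hasDerivWithin_le
      (fun τ hτ => hTd s z τ hτ) hC (convex_Icc 0 1) ha hb
  -- Banach–Steinhaus: uniform bound for `z ↦ A' τ (R s₀ z)`
  have hBS : ∀ s₀ ∈ I, ∃ M₀ : ℝ, 0 ≤ M₀ ∧
      ∀ τ ∈ I, ∀ z, ‖A' τ (⟨R s₀ z, hmem s₀ z⟩ : D)‖ ≤ M₀ * ‖z‖ := by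
    intro s₀ hs₀
    have hpt : ∀ z, ∃ C, ∀ p : {p : ℝ × ℝ // p.1 ∈ I ∧ p.2 ∈ I ∧ p.1 ≠ p.2},
        ‖((p.1.2 - p.1.1)⁻¹ • (T p.1.2 s₀ - T p.1.1 s₀)) z‖ ≤ C := by
      intro z
      obtain ⟨C, hC⟩ := isCompact_Icc.exists_bound_of_continuousOn
        (hcont ⟨R s₀ z, hmem s₀ z⟩)
      refine ⟨C, ?_⟩
      rintro ⟨⟨a, b⟩, ha, hb, hab⟩
      have hmv := hMV s₀ z a b ha hb C hC
      have hba : b - a ≠ 0 := sub_ne_zero.2 (Ne.symm hab)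
      simp only [ContinuousLinearMap.smul_apply, ContinuousLinearMap.sub_apply,
        norm_smul, norm_inv, Real.norm_eq_abs]
      rw [Real.norm_eq_abs] at hmv
      calc |b - a|⁻¹ * ‖T b s₀ z - T a s₀ z‖ ≤ |b - a|⁻¹ * (C * |b - a|) := by
            gcongr
        _ = C := by
            field_simp
    obtain ⟨M, hM⟩ := banach_steinhaus hpt
    refine ⟨max M 0, le_max_right _ _, ?_⟩
    intro τ hτ z
    haveI := hneBot τ hτ
    have hsl := hasDerivWithinAt_iff_tendsto_slope.1 (hTd s₀ z τ hτ)
    refine le_of_tendsto hsl.norm ?_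
    filter_upwards [self_mem_nhdsWithin] with h hh
    obtain ⟨hhI, hhne⟩ := hh
    have hne' : τ ≠ h := fun e => hhne (by simp [e.symm])
    have hkey : slope (fun u => T u s₀ z) τ h
        = ((h - τ)⁻¹ • (T h s₀ - T τ s₀)) z := by
      simp [slope, vsub_eq_sub, ContinuousLinearMap.smul_apply,
        ContinuousLinearMap.sub_apply]
    rw [hkey]
    calc ‖((h - τ)⁻¹ • (T h s₀ - T τ s₀)) z‖
        ≤ ‖(h - τ)⁻¹ • (T h s₀ - T τ s₀)‖ * ‖z‖ := ContinuousLinearMap.le_opNorm _ _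
      _ ≤ max M 0 * ‖z‖ := by
          gcongr
          exact le_trans (hM ⟨(τ, h), hτ, hhI, hne'⟩) (le_max_left _ _)
  -- subtraction identity for A'
  have hφsub : ∀ s₀, ∀ τ ∈ I, ∀ w z,
      A' τ (⟨R s₀ w, hmem s₀ w⟩ : D) - A' τ (⟨R s₀ z, hmem s₀ z⟩ : D)
        = A' τ (⟨R s₀ (w - z), hmem s₀ (w - z)⟩ : D) := by
    intro s₀ τ hτ w z
    have h1 := (hTd s₀ w τ hτ).sub (hTd s₀ z τ hτ)
    have h2 := hTd s₀ (w - z) τ hτ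
    have he : (fun u => T u s₀ (w - z)) = fun u => T u s₀ w - T u s₀ z := by
      funext u; exact map_sub (T u s₀) w z
    rw [he] at h2
    exact huniq _ _ _ τ hτ h1 h2
  -- rewriting `R s x` through `R s₀`
  have hRw : ∀ s₀ s : ℝ, (⟨R s x, hmem s x⟩ : D)
      = ⟨R s₀ (T s₀ s x), hmem s₀ (T s₀ s x)⟩ := by
    intro s₀ s
    apply Subtype.ext
    show R s x = R s₀ (T s₀ s x)
    rw [hT]
    exact (hR2 s₀ ⟨R s x, hmem s x⟩).symm
  -- the function g
  set g : ℝ × ℝ → X := fun p => A' p.1 ⟨R p.2 x, hmem p.2 x⟩ with hgdef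
  -- joint continuity of g on I ×ˢ I
  have hg : ContinuousOn g (I ×ˢ I) := by
    rintro ⟨τ₀, s₀⟩ ⟨hτ₀, hs₀⟩
    obtain ⟨M₀, hM₀0, hM₀⟩ := hBS s₀ hs₀
    -- Lipschitz bound for u ↦ T u s₀ z
    have hLip : ∀ a ∈ I, ∀ b ∈ I, ∀ z, ‖T b s₀ z - T a s₀ z‖ ≤ M₀ * ‖z‖ * |b - a| := by
      intro a ha b hb z
      have := hMV s₀ z a b ha hb (M₀ * ‖z‖) (fun τ hτ => hM₀ τ hτ z)
      rwa [Real.norm_eq_abs] at this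
    -- smallness of `T s₀ s x - x`
    have hsmall : ∀ s ∈ I, M₀ * |s - s₀| ≤ 1/2 →
        ‖T s₀ s x - x‖ ≤ 2 * M₀ * |s - s₀| * ‖x‖ := by
      intro s hs hκ
      set w := T s₀ s x with hw
      have h1 : T s s₀ w = x := by rw [hw, hTcomp]; exact hT1 s x
      have h2 : ‖w - x‖ ≤ M₀ * ‖w‖ * |s - s₀| := by
        have h3 := hLip s hs s₀ hs₀ w
        rw [hT1, h1] at h3
        rwa [abs_sub_comm] at h3
      have h3 : ‖w‖ ≤ ‖w - x‖ + ‖x‖ := by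
        calc ‖w‖ = ‖w - x + x‖ := by rw [sub_add_cancel]
          _ ≤ ‖w - x‖ + ‖x‖ := norm_add_le _ _
      nlinarith [norm_nonneg (w - x), norm_nonneg x, abs_nonneg (s - s₀),
        mul_le_mul_of_nonneg_left h3 (mul_nonneg hM₀0 (abs_nonneg (s - s₀)))]
    rw [Metric.continuousWithinAt_iff]
    intro ε hε
    obtain ⟨δ₁, hδ₁, hd1⟩ := Metric.continuousWithinAt_iff.1
      (hcont ⟨R s₀ x, hmem s₀ x⟩ τ₀ hτ₀) (ε/2) (by linarith)
    set K : ℝ := 2 * M₀ * M₀ * ‖x‖ with hK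
    have hK0 : 0 ≤ K := by positivity
    set δ₂ : ℝ := min (1/(2*(M₀+1))) ((ε/2)/(K+1)) with hδ₂def
    have hδ₂ : 0 < δ₂ := by
      apply lt_min
      · positivity
      · positivity
    refine ⟨min δ₁ δ₂, lt_min hδ₁ hδ₂, ?_⟩
    rintro ⟨τ, s⟩ ⟨hτ, hs⟩ hdist
    rw [Prod.dist_eq] at hdist
    have hdτ : dist τ τ₀ < δ₁ :=
      lt_of_le_of_lt (le_max_left _ _) (lt_of_lt_of_le hdist (min_le_left _ _))
    have hds : |s - s₀| < δ₂ := by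
      have := lt_of_le_of_lt (le_max_right (dist τ τ₀) (dist s s₀))
        (lt_of_lt_of_le hdist (min_le_right _ _))
      rwa [Real.dist_eq] at this
    -- term 2
    have ht2 : dist (A' τ (⟨R s₀ x, hmem s₀ x⟩ : D)) (A' τ₀ (⟨R s₀ x, hmem s₀ x⟩ : D)) < ε/2 :=
      hd1 hτ hdτ
    -- term 1
    have hκ : M₀ * |s - s₀| ≤ 1/2 := by
      have h1 : |s - s₀| ≤ 1/(2*(M₀+1)) := le_trans hds.le (min_le_left _ _)
      have h2 : M₀ * |s - s₀| ≤ M₀ * (1/(2*(M₀+1))) :=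
        mul_le_mul_of_nonneg_left h1 hM₀0
      have h3 : M₀ * (1/(2*(M₀+1))) ≤ 1/2 := by
        rw [mul_one_div, div_le_div_iff₀ (by positivity : (0:ℝ) < 2*(M₀+1)) two_pos]
        nlinarith
      linarith
    have ht1 : ‖g (τ, s) - A' τ (⟨R s₀ x, hmem s₀ x⟩ : D)‖ < ε/2 := by
      have he1 : g (τ, s) = A' τ (⟨R s₀ (T s₀ s x), hmem s₀ (T s₀ s x)⟩ : D) := by
        simp only [hgdef]
        rw [hRw s₀ s]
      rw [he1, hφsub s₀ τ hτ (T s₀ s x) x]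
      have hb := hM₀ τ hτ (T s₀ s x - x)
      have hsm := hsmall s hs hκ
      have hchain : ‖A' τ (⟨R s₀ (T s₀ s x - x), hmem s₀ (T s₀ s x - x)⟩ : D)‖
          ≤ K * |s - s₀| := by
        calc ‖A' τ (⟨R s₀ (T s₀ s x - x), hmem s₀ (T s₀ s x - x)⟩ : D)‖
            ≤ M₀ * ‖T s₀ s x - x‖ := hb
          _ ≤ M₀ * (2 * M₀ * |s - s₀| * ‖x‖) := by
              exact mul_le_mul_of_nonneg_left hsm hM₀0
          _ = K * |s - s₀| := by rw [hK]; ring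
      have hfin : K * |s - s₀| < ε/2 := by
        have h1 : |s - s₀| ≤ (ε/2)/(K+1) := le_trans hds.le (min_le_right _ _)
        have h2 : K * |s - s₀| ≤ K * ((ε/2)/(K+1)) := mul_le_mul_of_nonneg_left h1 hK0
        have h3 : K * ((ε/2)/(K+1)) < ε/2 := by
          rw [mul_div_assoc']
          rw [div_lt_iff₀ (by positivity)]
          nlinarith
        linarith
      linarith
    calc dist (g (τ, s)) (g (τ₀, s₀))
        ≤ dist (g (τ, s)) (A' τ (⟨R s₀ x, hmem s₀ x⟩ : D))
          + dist (A' τ (⟨R s₀ x, hmem s₀ x⟩ : D)) (g (τ₀, s₀)) := dist_triangle _ _ _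
      _ < ε/2 + ε/2 := by
          apply add_lt_add
          · rw [dist_eq_norm]; exact ht1
          · exact ht2
      _ = ε := by ring
  -- uniform continuity and boundedness of g
  have hIc : IsCompact (I ×ˢ I) := isCompact_Icc.prod isCompact_Icc
  have hgUC : UniformContinuousOn g (I ×ˢ I) := hIc.uniformContinuousOn_of_continuous hg
  obtain ⟨Mg, hMg⟩ : ∃ Mg, ∀ p ∈ I ×ˢ I, ‖g p‖ ≤ Mg := hIc.exists_bound_of_continuousOn hg
  -- membership of the convex combination
  have hmemc : ∀ s ∈ I, ∀ t ∈ I, ∀ θ ∈ I, (t - s) * θ + s ∈ I := by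
    rintro s ⟨hs0, hs1⟩ t ⟨ht0, ht1⟩ θ ⟨h0, h1⟩
    constructor <;> nlinarith
  -- continuity / integrability of the parametrized integrand
  have hci : ∀ s ∈ I, ∀ t ∈ I, ContinuousOn (fun θ => g ((t - s) * θ + s, s)) I := by
    intro s hs t ht
    apply hg.comp ((((continuous_const.mul continuous_id).add
      continuous_const).prodMk continuous_const).continuousOn :
      ContinuousOn (fun θ : ℝ => ((t - s) * θ + s, s)) I)
    intro θ hθ
    exact ⟨hmemc s hs t ht θ hθ, hs⟩
  have hII : ∀ s ∈ I, ∀ t ∈ I,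
      IntervalIntegrable (fun θ => g ((t - s) * θ + s, s)) MeasureTheory.volume 0 1 := by
    intro s hs t ht
    apply ContinuousOn.intervalIntegrable
    rw [uIcc_of_le (zero_le_one)]
    exact hci s hs t ht
  -- definition of F
  set F : ℝ × ℝ → X := fun p => ∫ θ in (0:ℝ)..1, g ((p.2 - p.1) * θ + p.1, p.1) with hFdef
  -- FTC: integral of g over s..t
  have hftc : ∀ s ∈ I, ∀ a ∈ I, ∀ b ∈ I, a ≤ b →
      ∫ τ in a..b, g (τ, s) = T b s x - T a s x := by
    intro s hs a ha b hb hab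
    apply integral_eq_sub_of_hasDeriv_right_of_le hab
    · intro τ hτ
      exact ((hTd s x τ ⟨le_trans ha.1 hτ.1, le_trans hτ.2 hb.2⟩).continuousWithinAt).mono
        (Set.Icc_subset_Icc ha.1 hb.2)
    · intro τ hτ
      have hτI : τ ∈ Set.Ioo (0:ℝ) 1 :=
        ⟨lt_of_le_of_lt ha.1 hτ.1, lt_of_lt_of_le hτ.2 hb.2⟩
      exact ((hTd s x τ (Set.Ioo_subset_Icc_self hτI)).hasDerivAt
        (Icc_mem_nhds hτI.1 hτI.2)).hasDerivWithinAt
    · apply ContinuousOn.intervalIntegrable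
      apply hg.comp ((continuous_id.prodMk continuous_const).continuousOn)
      intro τ hτ
      rw [uIcc_of_le hab] at hτ
      exact ⟨⟨le_trans ha.1 hτ.1, le_trans hτ.2 hb.2⟩, hs⟩
  -- the off-diagonal formula
  have hFoff : ∀ s ∈ I, ∀ t ∈ I, s ≠ t →
      F (s, t) = (t - s)⁻¹ • (A t ⟨R s x, hmem s x⟩ - x) := by
    intro s hs t ht hst
    have hts : t - s ≠ 0 := sub_ne_zero.2 (Ne.symm hst)
    have h1 : F (s, t) = (t - s)⁻¹ • ∫ τ in (t-s)*0 + s..(t-s)*1 + s, g (τ, s) :=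
      intervalIntegral.integral_comp_mul_add (fun τ => g (τ, s)) hts s
    have he0 : (t - s) * 0 + s = s := by ring
    have he1 : (t - s) * 1 + s = t := by ring
    rw [he0, he1] at h1
    have h2 : ∫ τ in s..t, g (τ, s) = T t s x - T s s x := by
      rcases lt_or_gt_of_ne hst with h | h
      · exact hftc s hs s hs t ht h.le
      · rw [intervalIntegral.integral_symm, hftc s hs t ht s hs h.le]
        abel
    rw [h1, h2, hT1, hT]
  -- the diagonal value
  have hFdiag : ∀ t ∈ I, F (t, t) = A' t ⟨R t x, hmem t x⟩ := by
    intro t ht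
    simp only [hFdef, sub_self, zero_mul, zero_add, intervalIntegral.integral_const,
      sub_zero, one_smul]
    rfl
  -- continuity of F
  have hFcont : ContinuousOn F (I ×ˢ I) := by
    rw [Metric.continuousOn_iff]
    rintro ⟨s, t⟩ ⟨hs, ht⟩ ε hε
    obtain ⟨δ, hδ, hUC⟩ := Metric.uniformContinuousOn_iff.1 hgUC (ε/2) (by linarith)
    refine ⟨δ/2, by linarith, ?_⟩
    rintro ⟨s', t'⟩ ⟨hs', ht'⟩ hd
    rw [Prod.dist_eq] at hd
    obtain ⟨hd1, hd2⟩ := max_lt_iff.1 hd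
    rw [Real.dist_eq] at hd1 hd2
    rw [dist_eq_norm]
    have hsub : F (s', t') - F (s, t)
        = ∫ θ in (0:ℝ)..1, (g ((t' - s') * θ + s', s') - g ((t - s) * θ + s, s)) :=
      (intervalIntegral.integral_sub (hII s' hs' t' ht') (hII s hs t ht)).symm
    rw [hsub]
    have hbound : ‖∫ θ in (0:ℝ)..1,
        (g ((t' - s') * θ + s', s') - g ((t - s) * θ + s, s))‖ ≤ (ε/2) * |1 - 0| := by
      apply intervalIntegral.norm_integral_le_of_norm_le_const
      intro θ hθ
      rw [Set.uIoc_of_le zero_le_one] at hθ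
      have hθI : θ ∈ I := ⟨hθ.1.le, hθ.2⟩
      obtain ⟨hθ0, hθ1⟩ := id hθI
      rw [← dist_eq_norm]
      apply le_of_lt
      apply hUC _ ⟨hmemc s' hs' t' ht' θ hθI, hs'⟩ _ ⟨hmemc s hs t ht θ hθI, hs⟩
      rw [Prod.dist_eq]
      apply max_lt
      · rw [Real.dist_eq]
        have he : (t' - s') * θ + s' - ((t - s) * θ + s)
            = θ * (t' - t) + (1 - θ) * (s' - s) := by ring
        rw [he]
        have e1 : |θ * (t' - t)| ≤ θ * (δ/2) := by
          rw [abs_mul, abs_of_nonneg hθ0]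
          exact mul_le_mul_of_nonneg_left hd2.le hθ0
        have e2 : |(1 - θ) * (s' - s)| ≤ (1 - θ) * (δ/2) := by
          rw [abs_mul, abs_of_nonneg (by linarith : (0:ℝ) ≤ 1 - θ)]
          exact mul_le_mul_of_nonneg_left hd1.le (by linarith)
        have e3 : θ * (δ/2) + (1 - θ) * (δ/2) = δ/2 := by ring
        calc |θ * (t' - t) + (1 - θ) * (s' - s)|
            ≤ |θ * (t' - t)| + |(1 - θ) * (s' - s)| := abs_add_le _ _
          _ ≤ θ * (δ/2) + (1 - θ) * (δ/2) := add_le_add e1 e2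
          _ = δ/2 := e3
          _ < δ := by linarith
      · rw [Real.dist_eq]
        calc |s' - s| < δ/2 := hd1
          _ < δ := by linarith
    calc ‖∫ θ in (0:ℝ)..1, (g ((t' - s') * θ + s', s') - g ((t - s) * θ + s, s))‖
        ≤ (ε/2) * |1 - 0| := hbound
      _ = ε/2 := by norm_num
      _ < ε := by linarith
  -- the uniform bound
  have hFbound : ∀ s ∈ I, ∀ t ∈ I, s ≠ t →
      ‖(t - s)⁻¹ • (A t ⟨R s x, hmem s x⟩ - x)‖ ≤ max Mg 0 := by
    intro s hs t ht hst
    rw [← hFoff s hs t ht hst]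
    have : ‖F (s, t)‖ ≤ max Mg 0 * |1 - 0| := by
      apply intervalIntegral.norm_integral_le_of_norm_le_const
      intro θ hθ
      rw [Set.uIoc_of_le zero_le_one] at hθ
      have hθI : θ ∈ I := ⟨hθ.1.le, hθ.2⟩
      exact le_trans (hMg _ ⟨hmemc s hs t ht θ hθI, hs⟩) (le_max_left _ _)
    simpa using this
  -- uniform continuity on the off-diagonal set
  have hFUC : UniformContinuousOn F (I ×ˢ I) :=
    hIc.uniformContinuousOn_of_continuous hFcont
  have hUCfinal : UniformContinuousOn
      (fun p : ℝ × ℝ => (p.2 - p.1)⁻¹ • (A p.2 ⟨R p.1 x, hmem p.1 x⟩ - x))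
      {p : ℝ × ℝ | p ∈ I ×ˢ I ∧ p.1 ≠ p.2} := by
    set S' : Set (ℝ × ℝ) := {p : ℝ × ℝ | p ∈ I ×ˢ I ∧ p.1 ≠ p.2} with hS'
    have hsubS : S' ⊆ I ×ˢ I := fun p hp => hp.1
    have hUC' : UniformContinuousOn F S' :=
      hFUC.mono_left (inf_le_inf_left _ (principal_mono.2 (Set.prod_mono hsubS hsubS)))
    have hev : ∀ᶠ (q : (ℝ × ℝ) × (ℝ × ℝ)) in uniformity (ℝ × ℝ) ⊓ 𝓟 (S' ×ˢ S'),
        (F q.1, F q.2) = ((q.1.2 - q.1.1)⁻¹ • (A q.1.2 ⟨R q.1.1 x, hmem q.1.1 x⟩ - x),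
          (q.2.2 - q.2.1)⁻¹ • (A q.2.2 ⟨R q.2.1 x, hmem q.2.1 x⟩ - x)) := by
      have hmemev : ∀ᶠ (q : (ℝ × ℝ) × (ℝ × ℝ)) in uniformity (ℝ × ℝ) ⊓ 𝓟 (S' ×ˢ S'),
          q ∈ S' ×ˢ S' := by
        rw [Filter.eventually_inf_principal]
        exact Filter.Eventually.of_forall fun q hq => hq
      filter_upwards [hmemev] with q hq
      obtain ⟨⟨hq1, hq1ne⟩, ⟨hq2, hq2ne⟩⟩ := hq
      have e1 : F q.1 = (q.1.2 - q.1.1)⁻¹ • (A q.1.2 ⟨R q.1.1 x, hmem q.1.1 x⟩ - x) := by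
        have := hFoff q.1.1 hq1.1 q.1.2 hq1.2 hq1ne
        simpa using this
      have e2 : F q.2 = (q.2.2 - q.2.1)⁻¹ • (A q.2.2 ⟨R q.2.1 x, hmem q.2.1 x⟩ - x) := by
        have := hFoff q.2.1 hq2.1 q.2.2 hq2.2 hq2ne
        simpa using this
      rw [e1, e2]
    exact Filter.Tendsto.congr' hev hUC'
  exact ⟨F, hFcont, fun s hs t ht hst => hFoff s hs t ht hst, hFdiag,
    ⟨max Mg 0, hFbound⟩, hUCfinal⟩
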